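/- In an M-cylindric algebra, a + a = a for all a. -/

import Mathlib

attribute [local instance] Classical.propDecidable

/-- A De Morgan algebra: a bounded distributive lattice with an involutive
negation satisfying De Morgan's laws. -/
class DeMorganAlgebra (M : Type*) extends DistribLattice M, BoundedOrder M where
  dneg : M → M
  dneg_sup : ∀ x y : M, dneg (x ⊔ y) = dneg x ⊓ dneg y
  dneg_inf : ∀ x y : M, dneg (x ⊓ y) = dneg x ⊔ dneg y
  dneg_dneg : ∀ x : M, dneg (dneg x) = x

/-- An `M`-cylindric algebra (the fragment of the axioms relevant here):
Boolean axioms 1–5 together with axioms 23, 25 and 30 of the paper.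
Here `u ⊥` is `u_0` and `u ⊤` is `u_1`. -/
structure MCA (M : Type*) [Fintype M] [DeMorganAlgebra M] (A : Type*) where
  add : A → A → A
  mul : A → A → A
  neg : A → A
  u : M → A
  delta : M → A → A
  add_comm : ∀ a b, add a b = add b a
  mul_comm : ∀ a b, mul a b = mul b a
  add_assoc : ∀ a b c, add (add a b) c = add a (add b c)
  mul_assoc : ∀ a b c, mul (mul a b) c = mul a (mul b c)
  mul_add : ∀ a b c, mul a (add b c) = add (mul a b) (mul a c)
  add_mul : ∀ a b c, add a (mul b c) = mul (add a b) (add a c)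
  add_u0 : ∀ a, add a (u ⊥) = a
  mul_u1 : ∀ a, mul a (u ⊤) = a
  delta_compl_add : ∀ (p : M) (a : A), add (delta p a) (neg (delta p a)) = u ⊤
  delta_compl_mul : ∀ (p : M) (a : A), mul (delta p a) (neg (delta p a)) = u ⊥
  ax23 : ∀ (p q : M) (a : A), p ≠ q → mul (delta p a) (delta q a) = u ⊥
  ax25 : ∀ (p : M) (a b : A),
    delta p (add a b) =
      haveI : Std.Commutative add := ⟨add_comm⟩
      haveI : Std.Associative add := ⟨add_assoc⟩
      (Finset.univ.filter fun qr : M × M => qr.1 ⊔ qr.2 = p).fold add (u ⊥)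
        (fun qr => mul (delta qr.1 a) (delta qr.2 b))
  ax30 : ∀ a b : A, (∀ p : M, delta p a = delta p b) → a = b

/-- In an M-cylindric algebra, a + a = a. -/
theorem stmt_9 {M A : Type*} [Fintype M] [DeMorganAlgebra M] (S : MCA M A) :
    ∀ a : A, S.add a a = a := by
  haveI : Std.Commutative S.add := ⟨S.add_comm⟩
  haveI : Std.Associative S.add := ⟨S.add_assoc⟩
  -- fold of all-zero function is zero
  have fold_zero : ∀ (s : Finset (M × M)) (f : M × M → A),
      (∀ x ∈ s, f x = S.u ⊥) → s.fold S.add (S.u ⊥) f = S.u ⊥ := by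
    intro s f hf
    induction s using Finset.induction with
    | empty => simp [Finset.fold_empty]
    | insert x s hx ih =>
      rw [Finset.fold_insert hx, hf _ (Finset.mem_insert_self _ _),
        ih (fun x hxs => hf x (Finset.mem_insert_of_mem hxs))]
      rw [S.add_u0]
  -- mul idempotent on delta elements
  have mul_idem : ∀ (p : M) (a : A), S.mul (S.delta p a) (S.delta p a) = S.delta p a := by
    intro p a
    conv_rhs => rw [← S.mul_u1 (S.delta p a), ← S.delta_compl_add p a, S.mul_add,
      S.delta_compl_mul, S.add_u0]
  intro a
  apply S.ax30
  intro p
  rw [S.ax25]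
  have hmem : (p, p) ∈ (Finset.univ.filter fun qr : M × M => qr.1 ⊔ qr.2 = p) := by
    simp
  rw [← Finset.insert_erase hmem, Finset.fold_insert (Finset.notMem_erase _ _)]
  rw [fold_zero _ _ ?_, mul_idem, S.add_u0]
  intro qr hqr
  simp only [Finset.mem_erase, Finset.mem_filter, Finset.mem_univ, true_and] at hqr
  obtain ⟨hne, hsup⟩ := hqr
  apply S.ax23
  intro h
  apply hne
  rw [h, sup_idem] at hsup
  rw [Prod.ext_iff]
  exact ⟨hsup ▸ h ▸ rfl, hsup⟩
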